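/- Let x₁, x₂, a₁, a₂, y₁, y₂, b₁, b₂ ∈ ℝ and let M be a real number strictly larger than each of |x₁ - a₁|, |x₂ - a₂|, |y₁ - b₁|, |y₂ - b₂|. Then the implication '(a₁ ≤ x₁ and x₂ ≤ a₂) → (y₁ - b₁)(y₂ - b₂) ≥ 0' holds if and only if there exist u, v, w, t ∈ {0,1} satisfying: x₁ + M(1-u) ≥ a₁; x₁ - M·u < a₁; x₂ ≤ a₂ + M(1-v); x₂ > a₂ - M·v; 0 ≤ u + v - 2t ≤ 1; y₁ - b₁ ≥ -M·w - M(1-t); y₁ - b₁ ≤ M(1-w) + M(1-t); y₂ - b₂ ≥ -M·w - M(1-t); and y₂ - b₂ ≤ M(1-w) + M(1-t). -/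
import Mathlib


/-- A conditional same-sign (product nonnegative) condition is equivalent to a
mixed-integer big-M system (Lemma 3 / `lemma:second`). -/
theorem conditional_product_bigM
    (x₁ x₂ a₁ a₂ y₁ y₂ b₁ b₂ M : ℝ)
    (h₁ : |x₁ - a₁| < M) (h₂ : |x₂ - a₂| < M)
    (h₃ : |y₁ - b₁| < M) (h₄ : |y₂ - b₂| < M) :
    ((a₁ ≤ x₁ ∧ x₂ ≤ a₂) → (y₁ - b₁) * (y₂ - b₂) ≥ 0) ↔
    ∃ u v w t : ℝ,
      (u = 0 ∨ u = 1) ∧ (v = 0 ∨ v = 1) ∧ (w = 0 ∨ w = 1) ∧ (t = 0 ∨ t = 1) ∧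
      x₁ + M * (1 - u) ≥ a₁ ∧
      x₁ - M * u < a₁ ∧
      x₂ ≤ a₂ + M * (1 - v) ∧
      x₂ > a₂ - M * v ∧
      (0 ≤ u + v - 2 * t ∧ u + v - 2 * t ≤ 1) ∧
      y₁ - b₁ ≥ -(M * w) - M * (1 - t) ∧
      y₁ - b₁ ≤ M * (1 - w) + M * (1 - t) ∧
      y₂ - b₂ ≥ -(M * w) - M * (1 - t) ∧
      y₂ - b₂ ≤ M * (1 - w) + M * (1 - t) := by
  have hM : 0 < M := lt_of_le_of_lt (abs_nonneg _) h₁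
  obtain ⟨e1l, e1r⟩ := abs_lt.mp h₁
  obtain ⟨e2l, e2r⟩ := abs_lt.mp h₂
  obtain ⟨e3l, e3r⟩ := abs_lt.mp h₃
  obtain ⟨e4l, e4r⟩ := abs_lt.mp h₄
  constructor
  · intro h
    by_cases hx1 : a₁ ≤ x₁
    · by_cases hx2 : x₂ ≤ a₂
      · have hp := h ⟨hx1, hx2⟩
        by_cases hy : 0 ≤ y₁ - b₁ ∧ 0 ≤ y₂ - b₂
        · exact ⟨1, 1, 0, 1, Or.inr rfl, Or.inr rfl, Or.inl rfl, Or.inr rfl,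
            by linarith, by linarith, by linarith, by linarith,
            ⟨by norm_num, by norm_num⟩,
            by linarith [hy.1], by linarith, by linarith [hy.2], by linarith⟩
        · have hneg : y₁ - b₁ ≤ 0 ∧ y₂ - b₂ ≤ 0 := by
            push_neg at hy
            rcases le_or_gt 0 (y₁ - b₁) with hA | hA
            · have hB := hy hA
              exact ⟨by nlinarith, by linarith⟩
            · exact ⟨le_of_lt hA, by nlinarith⟩
          exact ⟨1, 1, 1, 1, Or.inr rfl, Or.inr rfl, Or.inr rfl, Or.inr rfl,
            by linarith, by linarith, by linarith, by linarith,
            ⟨by norm_num, by norm_num⟩,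
            by linarith, by linarith [hneg.1], by linarith, by linarith [hneg.2]⟩
      · push_neg at hx2
        exact ⟨1, 0, 0, 0, Or.inr rfl, Or.inl rfl, Or.inl rfl, Or.inl rfl,
          by linarith, by linarith, by linarith, by linarith,
          ⟨by norm_num, by norm_num⟩,
          by linarith, by linarith, by linarith, by linarith⟩
    · push_neg at hx1
      by_cases hx2 : x₂ ≤ a₂
      · exact ⟨0, 1, 0, 0, Or.inl rfl, Or.inr rfl, Or.inl rfl, Or.inl rfl,
          by linarith, by linarith, by linarith, by linarith,
          ⟨by norm_num, by norm_num⟩,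
          by linarith, by linarith, by linarith, by linarith⟩
      · push_neg at hx2
        exact ⟨0, 0, 0, 0, Or.inl rfl, Or.inl rfl, Or.inl rfl, Or.inl rfl,
          by linarith, by linarith, by linarith, by linarith,
          ⟨by norm_num, by norm_num⟩,
          by linarith, by linarith, by linarith, by linarith⟩
  · rintro ⟨u, v, w, t, hu, hv, hw, ht, c1, c2, c3, c4, ⟨c5, c6⟩, c7, c8, c9, c10⟩ ⟨hx1, hx2⟩
    rcases hu with rfl | rfl
    · exfalso; linarith
    rcases hv with rfl | rfl
    · exfalso; linarith
    rcases ht with rfl | rfl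
    · exfalso; linarith
    rcases hw with rfl | rfl
    · nlinarith [c7, c9]
    · nlinarith [c8, c10]
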